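/- (Best response under intensity rationing, compete case.) Assume p₀ ≤ θ and p₀ ≤ p_M < p⋆, and let q_M ≥ θ − p₀ − 2·√((p_M − p₀)(θ − p_M)). Define the independent seller's demand D(p) = max(θ − p, 0) for p ≤ p_M and D(p) = max(θ − p − q_M, 0) for p > p_M, and their utility u(p) = ((1−α)p − c_I)·D(p). Then u(p_M) ≥ u(p) for all p ≥ 0; that is, matching the marketplace operator's price p_M is a best response (a de-monopolized outcome, since p_M < p⋆). -/

import Mathlib

/-- Best response under intensity rationing, compete case: For
`p₀ ≤ p_M < p⋆` and `q_M ≥ θ − p₀ − 2√((p_M − p₀)(θ − p_M))`, matching the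
marketplace operator's price `p_M` maximizes the independent seller's utility
`u(p) = ((1−α)p − c_I)·D(p)`, where `D(p) = max(θ − p, 0)` for `p ≤ p_M` and
`D(p) = max(θ − p − q_M, 0)` for `p > p_M`. -/
theorem stmt_12 (θ α cI pM qM : ℝ) (hθ : 0 < θ) (hα0 : 0 ≤ α) (hα1 : α < 1)
    (hcI : 0 ≤ cI) (hp0 : cI / (1 - α) ≤ θ)
    (hpM0 : cI / (1 - α) ≤ pM) (hpM1 : pM < (cI / (1 - α) + θ) / 2)
    (hqM : qM ≥ θ - cI / (1 - α)
        - 2 * Real.sqrt ((pM - cI / (1 - α)) * (θ - pM))) :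
    ∀ p : ℝ, 0 ≤ p →
      (fun p' : ℝ => ((1 - α) * p' - cI)
          * (if p' ≤ pM then max (θ - p') 0 else max (θ - p' - qM) 0)) p
        ≤ (fun p' : ℝ => ((1 - α) * p' - cI)
          * (if p' ≤ pM then max (θ - p') 0 else max (θ - p' - qM) 0)) pM := by
  intro p hp
  simp only
  have hβ : (0:ℝ) < 1 - α := by linarith
  set p₀ := cI / (1 - α) with hp₀def
  have hcI' : cI = (1 - α) * p₀ := by
    rw [hp₀def, mul_div_assoc', eq_div_iff hβ.ne', mul_comm]
  have hp₀nn : 0 ≤ p₀ := div_nonneg hcI hβ.le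
  have hpMθ : pM ≤ θ := by linarith
  set S := Real.sqrt ((pM - p₀) * (θ - pM)) with hSdef
  have hSnn : 0 ≤ S := Real.sqrt_nonneg _
  have hS2 : S ^ 2 = (pM - p₀) * (θ - pM) :=
    Real.sq_sqrt (mul_nonneg (by linarith) (by linarith))
  rw [if_pos (le_refl pM), max_eq_left (by linarith : (0:ℝ) ≤ θ - pM)]
  by_cases hcase : p ≤ pM
  · rw [if_pos hcase]
    rcases le_or_gt (θ - p) 0 with h | h
    · rw [max_eq_right h]
      nlinarith [mul_nonneg (mul_nonneg hβ.le (show (0:ℝ) ≤ pM - p₀ by linarith))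
        (show (0:ℝ) ≤ θ - pM by linarith)]
    · rw [max_eq_left h.le]
      nlinarith [mul_nonneg (mul_nonneg hβ.le (show (0:ℝ) ≤ pM - p by linarith))
        (show (0:ℝ) ≤ θ + p₀ - pM - p by linarith)]
  · push_neg at hcase
    rw [if_neg (not_le.mpr hcase)]
    rcases le_or_gt (θ - p - qM) 0 with h | h
    · rw [max_eq_right h]
      nlinarith [mul_nonneg (mul_nonneg hβ.le (show (0:ℝ) ≤ pM - p₀ by linarith))
        (show (0:ℝ) ≤ θ - pM by linarith)]
    · rw [max_eq_left h.le]
      nlinarith [sq_nonneg (S - (p - p₀)), hS2,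
        mul_nonneg (show (0:ℝ) ≤ p - p₀ by linarith)
          (show (0:ℝ) ≤ qM - (θ - p₀ - 2 * S) by linarith), hβ.le]
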